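/- Let m₀, i, m₁ : ℝ → ℝ → ℝ be continuous (m₁ independent of disease duration) with i ≥ 0, and let S₀ : ℝ → ℝ be continuous with S₀ > 0. Define S(t,a) := S₀(t−a)·exp(−∫₀ᵃ (m₀(t−a+τ,τ) + i(t−a+τ,τ)) dτ), C⋆(t,a) := ∫₀ᵃ i(t−δ, a−δ)·S(t−δ, a−δ)·exp(−∫₀^δ m₁(t−δ+τ, a−δ+τ) dτ) dδ, and the prevalence odds π(t,a) := C⋆(t,a)/S(t,a). Then for every t ∈ ℝ and a > 0, the function s ↦ π(t+s, a+s) has derivative i(t,a) − π(t,a)·(m₁(t,a) − m₀(t,a) − i(t,a)) at s = 0. (The linear partial differential equation of Brunet and Struchiner: (∂ₜ+∂ₐ)π = i − π·(m₁ − m₀ − i).) -/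

import Mathlib

/-- Linear PDE of Brunet and Struchiner for the prevalence odds in the
duration-independent case:
`(∂ₜ+∂ₐ) π = i − π·(m₁ − m₀ − i)`. -/
theorem brunet_struchiner_odds_pde
    (m₀ i m₁ : ℝ → ℝ → ℝ)
    (hm₀ : Continuous fun q : ℝ × ℝ => m₀ q.1 q.2)
    (hi : Continuous fun q : ℝ × ℝ => i q.1 q.2)
    (hi_nonneg : ∀ t a : ℝ, 0 ≤ i t a)
    (hm₁ : Continuous fun q : ℝ × ℝ => m₁ q.1 q.2)
    (S₀ : ℝ → ℝ) (hS₀ : Continuous S₀) (hS₀_pos : ∀ u : ℝ, 0 < S₀ u)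
    (S : ℝ → ℝ → ℝ)
    (hS : ∀ t a : ℝ, S t a = S₀ (t - a) *
      Real.exp (-∫ τ in (0:ℝ)..a, (m₀ (t - a + τ) τ + i (t - a + τ) τ)))
    (Cstar : ℝ → ℝ → ℝ)
    (hCstar : ∀ t a : ℝ, Cstar t a =
      ∫ δ in (0:ℝ)..a, i (t - δ) (a - δ) * S (t - δ) (a - δ) *
        Real.exp (-∫ τ in (0:ℝ)..δ, m₁ (t - δ + τ) (a - δ + τ)))
    (π : ℝ → ℝ → ℝ)
    (hπ : ∀ t a : ℝ, π t a = Cstar t a / S t a) :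
    ∀ t a : ℝ, 0 < a →
      HasDerivAt (fun s : ℝ => π (t + s) (a + s))
        (i t a - π t a * (m₁ t a - m₀ t a - i t a)) 0 := by
  intro t a _ha
  -- auxiliary one-variable functions
  set k : ℝ → ℝ := fun τ => m₀ (t - a + τ) τ + i (t - a + τ) τ with hk_def
  have hk : Continuous k := by
    have h1 : Continuous fun τ : ℝ => m₀ (t - a + τ) τ :=
      hm₀.comp ((continuous_const.add continuous_id).prodMk continuous_id)
    have h2 : Continuous fun τ : ℝ => i (t - a + τ) τ :=
      hi.comp ((continuous_const.add continuous_id).prodMk continuous_id)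
    exact h1.add h2
  set h : ℝ → ℝ := fun x => m₁ (t + x) (a + x) with hh_def
  have hh : Continuous h :=
    hm₁.comp ((continuous_const.add continuous_id).prodMk (continuous_const.add continuous_id))
  -- S along the characteristic
  have hScEq : ∀ s : ℝ, S (t + s) (a + s)
      = S₀ (t - a) * Real.exp (-∫ τ in (0:ℝ)..(a + s), k τ) := by
    intro s
    rw [hS, show t + s - (a + s) = t - a by ring]
  -- primitives are continuous
  have hKprim : Continuous fun x : ℝ => ∫ τ in (0:ℝ)..x, k τ :=
    continuous_iff_continuousAt.2 fun x =>
      ((hk.integral_hasStrictDerivAt 0 x).hasDerivAt).continuousAt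
  have hHprim : Continuous fun x : ℝ => ∫ τ in (0:ℝ)..x, h τ :=
    continuous_iff_continuousAt.2 fun x =>
      ((hh.integral_hasStrictDerivAt 0 x).hasDerivAt).continuousAt
  -- derivative of S along the characteristic
  have hSd : HasDerivAt (fun s : ℝ => S (t + s) (a + s)) (-(k a) * S t a) 0 := by
    have hI : HasDerivAt (fun s : ℝ => ∫ τ in (0:ℝ)..(a + s), k τ) (k a) 0 := by
      have h1 : HasDerivAt (fun s : ℝ => a + s) 1 0 := by
        simpa using (hasDerivAt_id (0:ℝ)).const_add a
      have h2 := (hk.integral_hasStrictDerivAt 0 (a + 0)).hasDerivAt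
      have := h2.comp 0 h1
      simpa [Function.comp_def] using this
    have := ((hI.neg.exp).const_mul (S₀ (t - a)))
    simp only [Pi.neg_apply] at this
    have heq : (fun s : ℝ => S₀ (t - a) * Real.exp (-∫ τ in (0:ℝ)..(a + s), k τ))
        = fun s : ℝ => S (t + s) (a + s) := by
      funext s; rw [hScEq]
    rw [heq] at this
    refine this.congr_deriv ?_
    symm
    have h0 := hScEq 0
    rw [show t + (0:ℝ) = t by ring, show a + (0:ℝ) = a by ring] at h0
    rw [show a + (0:ℝ) = a by ring, h0]
    ring
  -- pointwise rewrite of Cstar along the characteristic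
  set g : ℝ → ℝ := fun σ => i (t - σ) (a - σ) * S (t - σ) (a - σ) *
      Real.exp (-∫ τ in (-σ)..(0:ℝ), h τ) with hg_def
  have hCEq : ∀ s : ℝ, Cstar (t + s) (a + s)
      = Real.exp (-∫ x in (0:ℝ)..s, h x) * ∫ σ in (-s)..a, g σ := by
    intro s
    have step1 : Cstar (t + s) (a + s)
        = ∫ σ in (-s)..a, (i (t + s - (σ + s)) (a + s - (σ + s)) *
            S (t + s - (σ + s)) (a + s - (σ + s)) *
            Real.exp (-∫ τ in (0:ℝ)..(σ + s), m₁ (t + s - (σ + s) + τ) (a + s - (σ + s) + τ))) := by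
      rw [hCstar]
      rw [intervalIntegral.integral_comp_add_right (fun δ => i (t + s - δ) (a + s - δ) *
        S (t + s - δ) (a + s - δ) *
        Real.exp (-∫ τ in (0:ℝ)..δ, m₁ (t + s - δ + τ) (a + s - δ + τ))) s]
      norm_num
    rw [step1]
    have step2 : ∀ σ : ℝ, (i (t + s - (σ + s)) (a + s - (σ + s)) *
          S (t + s - (σ + s)) (a + s - (σ + s)) *
          Real.exp (-∫ τ in (0:ℝ)..(σ + s), m₁ (t + s - (σ + s) + τ) (a + s - (σ + s) + τ)))
        = g σ * Real.exp (-∫ x in (0:ℝ)..s, h x) := by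
      intro σ
      rw [show t + s - (σ + s) = t - σ by ring, show a + s - (σ + s) = a - σ by ring]
      have e1 : (fun τ : ℝ => m₁ (t - σ + τ) (a - σ + τ)) = fun τ : ℝ => h (τ - σ) := by
        funext τ
        rw [hh_def]
        rw [show t - σ + τ = t + (τ - σ) by ring, show a - σ + τ = a + (τ - σ) by ring]
      rw [show (∫ τ in (0:ℝ)..(σ + s), m₁ (t - σ + τ) (a - σ + τ))
          = ∫ τ in (0:ℝ)..(σ + s), h (τ - σ) from by rw [e1]]
      rw [intervalIntegral.integral_comp_sub_right h σ]
      rw [show (0:ℝ) - σ = -σ by ring, show σ + s - σ = s by ring]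
      rw [← intervalIntegral.integral_add_adjacent_intervals
        (hh.intervalIntegrable (-σ) 0) (hh.intervalIntegrable 0 s)]
      rw [neg_add, Real.exp_add]
      rw [hg_def]; ring
    rw [intervalIntegral.integral_congr (fun σ _ => step2 σ)]
    rw [intervalIntegral.integral_mul_const]
    ring
  -- continuity of g
  have hgcont : Continuous g := by
    have h1 : Continuous fun σ : ℝ => i (t - σ) (a - σ) :=
      hi.comp ((continuous_const.sub continuous_id).prodMk (continuous_const.sub continuous_id))
    have h2 : Continuous fun σ : ℝ => S (t - σ) (a - σ) := by
      have heq : (fun σ : ℝ => S (t - σ) (a - σ))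
          = fun σ : ℝ => S₀ (t - a) * Real.exp (-∫ τ in (0:ℝ)..(a - σ), k τ) := by
        funext σ
        rw [hS, show t - σ - (a - σ) = t - a by ring]
      rw [heq]
      exact continuous_const.mul
        ((hKprim.comp (continuous_const.sub continuous_id)).neg.rexp)
    have h3 : Continuous fun σ : ℝ => Real.exp (-∫ τ in (-σ)..(0:ℝ), h τ) := by
      have heq : (fun σ : ℝ => -∫ τ in (-σ)..(0:ℝ), h τ)
          = fun σ : ℝ => ∫ τ in (0:ℝ)..(-σ), h τ := by
        funext σ
        rw [intervalIntegral.integral_symm, neg_neg]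
      exact (by rw [heq]; exact hHprim.comp continuous_neg : Continuous fun σ : ℝ =>
        -∫ τ in (-σ)..(0:ℝ), h τ).rexp
    exact (h1.mul h2).mul h3
  -- derivative of the two factors
  have hE : HasDerivAt (fun s : ℝ => Real.exp (-∫ x in (0:ℝ)..s, h x)) (-(h 0)) 0 := by
    have hH : HasDerivAt (fun s : ℝ => ∫ x in (0:ℝ)..s, h x) (h 0) 0 :=
      (hh.integral_hasStrictDerivAt 0 0).hasDerivAt
    have := hH.neg.exp
    simpa using this
  have hΦ : HasDerivAt (fun s : ℝ => ∫ σ in (-s)..a, g σ) (g 0) 0 := by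
    have hΨ : HasDerivAt (fun u : ℝ => ∫ σ in u..a, g σ) (-(g 0)) 0 :=
      intervalIntegral.integral_hasDerivAt_left (hgcont.intervalIntegrable 0 a)
        (hgcont.stronglyMeasurableAtFilter _ _) hgcont.continuousAt
    have hneg : HasDerivAt (fun s : ℝ => -s) (-1 : ℝ) 0 := hasDerivAt_neg 0
    have hΨ' : HasDerivAt (fun u : ℝ => ∫ σ in u..a, g σ) (-(g 0)) ((fun s : ℝ => -s) 0) := by
      simpa using hΨ
    have := hΨ'.comp 0 hneg
    simpa [Function.comp_def] using this
  -- derivative of Cstar along the characteristic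
  have hCd : HasDerivAt (fun s : ℝ => Cstar (t + s) (a + s))
      (-(h 0) * Cstar t a + g 0) 0 := by
    have hmul := hE.mul hΦ
    have heq : (fun s : ℝ => Real.exp (-∫ x in (0:ℝ)..s, h x) * ∫ σ in (-s)..a, g σ)
        = fun s : ℝ => Cstar (t + s) (a + s) := by
      funext s; rw [hCEq]
    simp only [Pi.mul_def] at hmul
    rw [heq] at hmul
    refine hmul.congr_deriv ?_
    symm
    have h0 : Cstar t a = ∫ σ in (0:ℝ)..a, g σ := by
      have := hCEq 0
      simpa using this
    simp [h0]
  -- positivity of S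
  have hSpos : 0 < S t a := by
    rw [hS]; exact mul_pos (hS₀_pos _) (Real.exp_pos _)
  -- assemble
  have hdiv := hCd.div hSd (by simpa using hSpos.ne')
  have heq : (fun s : ℝ => Cstar (t + s) (a + s) / S (t + s) (a + s))
      = fun s : ℝ => π (t + s) (a + s) := by
    funext s; rw [hπ]
  simp only [Pi.div_def] at hdiv
  rw [heq] at hdiv
  refine hdiv.congr_deriv ?_
  symm
  have hg0 : g 0 = i t a * S t a := by
    rw [hg_def]; simp
  have hh0 : h 0 = m₁ t a := by rw [hh_def]; simp
  have hka : k a = m₀ t a + i t a := by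
    rw [hk_def]; simp
  rw [hπ, hg0, hh0, hka]
  have hSne : S t a ≠ 0 := hSpos.ne'
  simp only [add_zero]
  field_simp
  ring
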